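/- For every natural number n, the normal ordering (X + q^{n-1} s D_q)(X + q^{n-2} s D_q) ⋯ (X + s D_q) = Σ_{m=0}^{n} Σ_{j=0}^{min(m,n-m)} q^{C(j+1,2) + C(n-m,2)} · (1+q^{m+1})(1+q^{m+2})⋯(1+q^{n-j}) · [n]_q! · s^{n-m} / ((1+q)(1+q²)⋯(1+q^{n-m}) · [j]_q! · [m-j]_q! · [n-m-j]_q!) · X^{m-j} D_q^{n-m-j} holds as an identity of operators on the polynomial ring, where C(a,2) = a(a-1)/2. -/
import Mathlib


noncomputable section

/-- The field `ℚ(q,s)` of rational functions in two indeterminates. -/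
abbrev F : Type := FractionRing (MvPolynomial (Fin 2) ℚ)

/-- The indeterminate `q`. -/
def q : F := algebraMap (MvPolynomial (Fin 2) ℚ) F (MvPolynomial.X 0)

/-- The indeterminate `s`. -/
def s : F := algebraMap (MvPolynomial (Fin 2) ℚ) F (MvPolynomial.X 1)

/-- The q-integer `[n]_q = 1 + q + ⋯ + q^{n-1}`. -/
def qInt (n : ℕ) : F := ∑ i ∈ Finset.range n, q ^ i

/-- The q-factorial `[n]_q! = ∏_{k=1}^n [k]_q`. -/
def qFact (n : ℕ) : F := ∏ k ∈ Finset.range n, qInt (k + 1)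

/-- The q-binomial coefficient `[n choose k]_q = [n]_q!/([k]_q! [n-k]_q!)`. -/
def qBinom (n k : ℕ) : F := qFact n / (qFact k * qFact (n - k))

/-- The operator `X` of multiplication by `x` on `F[x]`. -/
def Xop : Module.End F (Polynomial F) := LinearMap.mulLeft F Polynomial.X

/-- Division by `x` (discarding the constant term), as a linear map. -/
def divXL : Polynomial F →ₗ[F] Polynomial F where
  toFun := Polynomial.divX
  map_add' p r := Polynomial.divX_add
  map_smul' a p := by
    ext n
    simp [Polynomial.coeff_divX, Polynomial.coeff_smul]

/-- The q-derivative `D_q f(x) = (f(qx) - f(x))/((q-1)x)`; it is the F-linear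
operator on `F[x]` determined by `D_q x^n = [n]_q x^{n-1}`. -/
def Dq : Module.End F (Polynomial F) :=
  (q - 1)⁻¹ •
    (divXL ∘ₗ
      ((Polynomial.aeval (Polynomial.C q * Polynomial.X)).toLinearMap - LinearMap.id))

/-- The polynomials `h_n(x,t) = Σ_j q^{j²} t^j [n]_q!/((1+q)⋯(1+q^j)·[j]_q!·[n-2j]_q!)
x^{n-2j}` (the parameter `t` will be specialized to `s` or `q²s`). -/
def h (t : F) (n : ℕ) : Polynomial F :=
  ∑ j ∈ Finset.range (n / 2 + 1),
    Polynomial.C (q ^ (j ^ 2) * t ^ j * qFact n /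
        ((∏ i ∈ Finset.range j, (1 + q ^ (i + 1))) * qFact j * qFact (n - 2 * j))) *
      Polynomial.X ^ (n - 2 * j)


/-- `F(n) = (X + q^{n-1} s D_q)(X + q^{n-2} s D_q) ⋯ (X + s D_q)`,
with the factor `(X + s D_q)` acting first. -/
def Fop : ℕ → Module.End F (Polynomial F)
  | 0 => 1
  | n + 1 => (Xop + (q ^ n * s) • Dq) * Fop n

open Finset Polynomial in
lemma algebraMap_injF : Function.Injective (algebraMap (MvPolynomial (Fin 2) ℚ) F) :=
  IsFractionRing.injective _ _

open Finset Polynomial in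
lemma ne_zero_of_eval (p : MvPolynomial (Fin 2) ℚ) (f : Fin 2 → ℚ)
    (h : MvPolynomial.eval f p ≠ 0) :
    algebraMap (MvPolynomial (Fin 2) ℚ) F p ≠ 0 := fun hz => by
  have : p = 0 := algebraMap_injF (by simpa using hz)
  simp [this] at h

open Finset Polynomial in
lemma q_sub_one_ne : q - 1 ≠ 0 := by
  have h : q - 1 = algebraMap (MvPolynomial (Fin 2) ℚ) F (MvPolynomial.X 0 - 1) := by
    simp [q]
  rw [h]
  apply ne_zero_of_eval _ (fun _ => (2:ℚ))
  norm_num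

open Finset in
lemma qInt_ne_zero (k : ℕ) : qInt (k+1) ≠ 0 := by
  have h : qInt (k+1) = algebraMap (MvPolynomial (Fin 2) ℚ) F
      (∑ i ∈ range (k+1), MvPolynomial.X 0 ^ i) := by
    simp [qInt, q, map_sum]
  rw [h]
  apply ne_zero_of_eval _ (fun _ => (1:ℚ))
  simp
  positivity

open Finset in
lemma one_add_q_pow_ne_zero (i : ℕ) : 1 + q ^ i ≠ 0 := by
  have h : 1 + q ^ i = algebraMap (MvPolynomial (Fin 2) ℚ) F
      (1 + MvPolynomial.X 0 ^ i) := by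
    simp [q]
  rw [h]
  apply ne_zero_of_eval _ (fun _ => (1:ℚ))
  simp

open Finset in
lemma qFact_ne_zero (n : ℕ) : qFact n ≠ 0 := by
  unfold qFact
  exact Finset.prod_ne_zero_iff.2 fun k _ => qInt_ne_zero k

open Finset in
lemma Qprod_ne_zero (k : ℕ) : (∏ i ∈ range k, (1 + q ^ (i+1))) ≠ 0 :=
  Finset.prod_ne_zero_iff.2 fun i _ => one_add_q_pow_ne_zero (i+1)

open Finset in
lemma Pprod_ne_zero (a b : ℕ) : (∏ i ∈ Icc a b, (1 + q ^ i)) ≠ 0 :=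
  Finset.prod_ne_zero_iff.2 fun i _ => one_add_q_pow_ne_zero i

lemma qInt_zero : qInt 0 = 0 := by simp [qInt]

lemma qInt_one : qInt 1 = 1 := by simp [qInt]

open Finset in
lemma qInt_succ (k : ℕ) : qInt (k+1) = q * qInt k + 1 := geom_sum_succ

open Finset in
lemma qInt_succ' (k : ℕ) : qInt (k+1) = q ^ k + qInt k := geom_sum_succ'

open Finset in
lemma qFact_succ (k : ℕ) : qFact (k+1) = qFact k * qInt (k+1) := prod_range_succ _ _

lemma qFact_zero : qFact 0 = 1 := by simp [qFact]

/-- `[k]_q = (q^k - 1)/(q - 1)`. -/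
lemma qInt_eq (k : ℕ) : qInt k = (q ^ k - 1) / (q - 1) := by
  rw [eq_div_iff q_sub_one_ne]
  exact geom_sum_mul q k

set_option maxHeartbeats 1000000
set_option synthInstance.maxHeartbeats 400000

open Finset Polynomial in
lemma Dq_X_pow (k : ℕ) : Dq (X ^ k : Polynomial F) = qInt k • X ^ (k-1) := by
  have happ : ∀ p : Polynomial F, Dq p
      = (q - 1)⁻¹ • divXL ((Polynomial.aeval (C q * X)).toLinearMap p - p) := by
    intro p
    rfl
  cases k with
  | zero =>
    rw [happ]
    simp only [pow_zero, AlgHom.toLinearMap_apply, map_one, sub_self, map_zero, smul_zero,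
      qInt_zero, zero_smul]
  | succ k =>
    rw [happ]
    have harg : (Polynomial.aeval (C q * X)).toLinearMap (X ^ (k+1) : Polynomial F)
        - (X ^ (k+1) : Polynomial F) = Polynomial.C (q^(k+1) - 1) * X ^ (k+1) := by
      rw [AlgHom.toLinearMap_apply, map_pow, Polynomial.aeval_X, mul_pow,
        ← Polynomial.C_pow, Polynomial.C_sub, Polynomial.C_1, sub_mul, one_mul]
    rw [harg]
    show (q - 1)⁻¹ • (Polynomial.C (q^(k+1) - 1) * X ^ (k+1)).divX = _
    rw [Polynomial.divX_C_mul, Polynomial.divX_X_pow]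
    simp only [Nat.succ_ne_zero, if_false, Nat.add_sub_cancel]
    rw [qInt_eq, Polynomial.smul_eq_C_mul, Polynomial.smul_eq_C_mul, ← mul_assoc,
      ← Polynomial.C_mul, inv_mul_eq_div]

open Finset Polynomial in
lemma end_ext {f g : Module.End F (Polynomial F)}
    (hfg : ∀ k : ℕ, f (X ^ k) = g (X ^ k)) : f = g := by
  apply Polynomial.lhom_ext'
  intro n
  apply LinearMap.ext_ring
  simpa only [LinearMap.comp_apply, Polynomial.X_pow_eq_monomial] using hfg n

open Finset Polynomial in
lemma Xop_apply (p : Polynomial F) : Xop p = X * p := rfl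

open Finset Polynomial in
lemma qInt_add (a k : ℕ) : qInt (a + k) = qInt a + q ^ a * qInt k := by
  rw [qInt_eq, qInt_eq, qInt_eq, pow_add]
  field_simp
  ring

open Finset Polynomial in
lemma Dq_mul_Xop : Dq * Xop = q • (Xop * Dq) + 1 := by
  apply end_ext
  intro k
  have h1 : (Dq * Xop) (X ^ k) = Dq (X ^ (k+1)) := by
    simp only [Module.End.mul_apply, Xop_apply, pow_succ, mul_comm]
  rw [h1, Dq_X_pow]
  simp only [Nat.add_sub_cancel, LinearMap.add_apply, LinearMap.smul_apply,
    Module.End.mul_apply, Module.End.one_apply]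
  rw [Dq_X_pow]
  cases k with
  | zero => simp [qInt_zero, qInt_one, Xop_apply]
  | succ k =>
    simp only [Nat.add_sub_cancel]
    rw [Xop_apply, mul_smul_comm, smul_smul, ← pow_succ', qInt_succ (k+1), add_smul,
      one_smul]

open Finset Polynomial in
lemma Dq_mul_Xop_pow : ∀ a : ℕ, Dq * Xop ^ a = (q ^ a) • (Xop ^ a * Dq) + qInt a • Xop ^ (a-1)
  | 0 => by simp [qInt_zero]
  | (a+1) => by
    have ih := Dq_mul_Xop_pow a
    rw [pow_succ, ← mul_assoc, ih, add_mul, smul_mul_assoc, smul_mul_assoc,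
      mul_assoc, Dq_mul_Xop, mul_add, mul_one, mul_smul_comm, ← mul_assoc, ← pow_succ]
    cases a with
    | zero => simp [qInt_zero, qInt_one]
    | succ b =>
      have hb : (b + 1) - 1 = b := rfl
      rw [hb, ← pow_succ, smul_add, smul_smul, Nat.add_sub_cancel]
      rw [qInt_succ' (b+1), add_smul, ← pow_succ]
      abel

/-- Normal-ordered monomial `X^a D^b`. -/
def Mop (a b : ℕ) : Module.End F (Polynomial F) := Xop ^ a * Dq ^ b

/-- The coefficient in the normal ordering. -/
def gc (n m j : ℕ) : F :=
  q ^ ((j + 1).choose 2 + (n - m).choose 2) *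
      (∏ i ∈ Finset.Icc (m + 1) (n - j), (1 + q ^ i)) * qFact n * s ^ (n - m) /
    ((∏ i ∈ Finset.range (n - m), (1 + q ^ (i + 1))) * qFact j * qFact (m - j) *
      qFact (n - m - j))

/-- The coefficient extended by zero outside the admissible range. -/
def cc (n m j : ℕ) : F := if m ≤ n ∧ j ≤ m ∧ m + j ≤ n then gc n m j else 0

lemma cc_of_pos {n m j : ℕ} (h : m ≤ n ∧ j ≤ m ∧ m + j ≤ n) : cc n m j = gc n m j :=
  if_pos h

lemma cc_of_neg {n m j : ℕ} (h : ¬(m ≤ n ∧ j ≤ m ∧ m + j ≤ n)) : cc n m j = 0 :=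
  if_neg h

lemma Xop_mul_Mop (a b : ℕ) : Xop * Mop a b = Mop (a+1) b := by
  rw [Mop, Mop, ← mul_assoc, ← pow_succ']

lemma Dq_mul_Mop (a b : ℕ) :
    Dq * Mop a b = (q ^ a) • Mop a (b+1) + qInt a • Mop (a-1) b := by
  rw [Mop, ← mul_assoc, Dq_mul_Xop_pow, add_mul, smul_mul_assoc, smul_mul_assoc,
    mul_assoc, ← pow_succ']
  rfl


lemma choose_two_succ (k : ℕ) : (k+1).choose 2 = k.choose 2 + k := by
  rw [Nat.choose_succ_succ, Nat.choose_one_right, Nat.add_comm]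

open Finset in
lemma caseA (n : ℕ) : gc (n+1) 0 0 = q ^ n * s * gc n 0 0 := by
  unfold gc
  simp only [Nat.sub_zero, qFact_zero]
  rw [choose_two_succ n, qFact_succ, Finset.prod_Icc_succ_top (show 0+1 ≤ n+1 by omega),
    Finset.prod_range_succ]
  have h1 := qFact_ne_zero n
  have h2 := Qprod_ne_zero n
  have h3 := one_add_q_pow_ne_zero (n+1)
  have h4 := qInt_ne_zero n
  have h5 := Pprod_ne_zero (0+1) n
  field_simp
  ring

lemma q_pow_sub_one_ne (k : ℕ) : q ^ (k+1) - 1 ≠ 0 := by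
  rw [← geom_sum_mul]
  exact mul_ne_zero (qInt_ne_zero k) q_sub_one_ne

open Finset in
lemma prod_Icc_bot (a b : ℕ) (h : a ≤ b) :
    (∏ i ∈ Icc a b, (1+q^i)) = (1+q^a) * ∏ i ∈ Icc (a+1) b, (1+q^i) := by
  rw [← Finset.Ico_add_one_right_eq_Icc, Finset.prod_eq_prod_Ico_succ_bot (by omega), Finset.Ico_add_one_right_eq_Icc]

set_option maxHeartbeats 2000000 in
open Finset in
lemma caseB (mm b : ℕ) : gc (mm+1+b+1) (mm+1) 0
    = gc (mm+1+b) mm 0 + q ^ (mm+1+b) * s * q ^ (mm+1) * gc (mm+1+b) (mm+1) 0 := by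
  unfold gc
  simp only [Nat.sub_zero, qFact_zero]
  rw [show mm+1+b+1-(mm+1) = b+1 from by omega, show mm+1+b-mm = b+1 from by omega,
    show mm+1+b-(mm+1) = b from by omega, choose_two_succ b,
    Finset.prod_Icc_succ_top (show mm+1+1 ≤ mm+1+b+1 from by omega),
    prod_Icc_bot (mm+1) (mm+1+b) (by omega),
    Finset.prod_range_succ, qFact_succ (mm+1+b), qFact_succ mm, qFact_succ b]
  rw [← mul_div_assoc, div_add_div _ _
    (by apply_rules [mul_ne_zero, qFact_ne_zero, qInt_ne_zero, Qprod_ne_zero,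
      Pprod_ne_zero, one_add_q_pow_ne_zero, one_ne_zero])
    (by apply_rules [mul_ne_zero, qFact_ne_zero, qInt_ne_zero, Qprod_ne_zero,
      Pprod_ne_zero, one_add_q_pow_ne_zero, one_ne_zero]),
    div_eq_div_iff
    (by apply_rules [mul_ne_zero, qFact_ne_zero, qInt_ne_zero, Qprod_ne_zero,
      Pprod_ne_zero, one_add_q_pow_ne_zero, one_ne_zero])
    (by apply_rules [mul_ne_zero, qFact_ne_zero, qInt_ne_zero, Qprod_ne_zero,
      Pprod_ne_zero, one_add_q_pow_ne_zero, one_ne_zero])]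
  simp only [qInt_eq]
  field_simp
  ring

lemma qFact_one : qFact 1 = 1 := by
  have : qFact 1 = qFact 0 * qInt 1 := qFact_succ 0
  rw [this, qFact_zero, qInt_one, mul_one]

open Finset in
lemma caseC (n : ℕ) : gc (n+1) (n+1) 0 = gc n n 0 := by
  unfold gc
  simp only [Nat.sub_zero, Nat.sub_self, qFact_zero]
  rw [Finset.Icc_eq_empty (show ¬(n+1+1 ≤ n+1) from by omega),
    Finset.Icc_eq_empty (show ¬(n+1 ≤ n) from by omega)]
  simp only [Finset.prod_empty, Finset.range_zero, pow_zero]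
  field_simp [qFact_ne_zero]

open Finset in
set_option maxHeartbeats 2000000 in
lemma caseD (jj b : ℕ) : gc (2*jj+b+3) (jj+1) (jj+1)
    = q ^ (2*jj+b+2) * s * gc (2*jj+b+2) (jj+1) (jj+1)
      + q ^ (2*jj+b+2) * s * qInt 1 * gc (2*jj+b+2) (jj+1) jj := by
  unfold gc
  rw [qInt_one, mul_one]
  rw [show 2*jj+b+3-(jj+1) = jj+b+2 from by omega,
    show 2*jj+b+2-(jj+1) = jj+b+1 from by omega,
    show 2*jj+b+2-jj = jj+b+2 from by omega,
    show jj+1-(jj+1) = 0 from by omega,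
    show jj+1-jj = 1 from by omega,
    show jj+b+2-(jj+1) = b+1 from by omega,
    show jj+b+1-(jj+1) = b from by omega,
    show jj+b+1-jj = b+1 from by omega,
    show jj+b+2 = jj+b+1+1 from by omega,
    show 2*jj+b+3 = 2*jj+b+2+1 from by omega,
    choose_two_succ (jj+1), choose_two_succ (jj+b+1),
    Finset.prod_Icc_succ_top (show jj+1+1 ≤ jj+b+1+1 from by omega),
    Finset.prod_range_succ, qFact_succ (2*jj+b+2), qFact_succ jj, qFact_succ b,
    qFact_zero, qFact_one]
  rw [← mul_div_assoc, ← mul_div_assoc, div_add_div _ _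
    (by apply_rules [mul_ne_zero, qFact_ne_zero, qInt_ne_zero, Qprod_ne_zero,
      Pprod_ne_zero, one_add_q_pow_ne_zero, one_ne_zero])
    (by apply_rules [mul_ne_zero, qFact_ne_zero, qInt_ne_zero, Qprod_ne_zero,
      Pprod_ne_zero, one_add_q_pow_ne_zero, one_ne_zero]),
    div_eq_div_iff
    (by apply_rules [mul_ne_zero, qFact_ne_zero, qInt_ne_zero, Qprod_ne_zero,
      Pprod_ne_zero, one_add_q_pow_ne_zero, one_ne_zero])
    (by apply_rules [mul_ne_zero, qFact_ne_zero, qInt_ne_zero, Qprod_ne_zero,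
      Pprod_ne_zero, one_add_q_pow_ne_zero, one_ne_zero])]
  simp only [qInt_eq, div_eq_mul_inv]
  ring

open Finset in
set_option maxHeartbeats 2000000 in
lemma caseE (jj : ℕ) : gc (2*jj+2) (jj+1) (jj+1)
    = q ^ (2*jj+1) * s * qInt 1 * gc (2*jj+1) (jj+1) jj := by
  unfold gc
  rw [qInt_one, mul_one]
  rw [show 2*jj+2-(jj+1) = jj+1 from by omega,
    show 2*jj+1-(jj+1) = jj from by omega,
    show 2*jj+1-jj = jj+1 from by omega,
    show jj+1-(jj+1) = 0 from by omega,
    show jj+1-jj = 1 from by omega,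
    show 2*jj+2 = 2*jj+1+1 from by omega]
  rw [Finset.Icc_eq_empty (show ¬(jj+1+1 ≤ jj+1) from by omega)]
  rw [Nat.sub_self, choose_two_succ (jj+1), choose_two_succ jj,
    Finset.prod_range_succ, qFact_succ (2*jj+1), qFact_succ jj, qFact_zero, qFact_one]
  rw [← mul_div_assoc, div_eq_div_iff
    (by apply_rules [mul_ne_zero, qFact_ne_zero, qInt_ne_zero, Qprod_ne_zero,
      Pprod_ne_zero, one_add_q_pow_ne_zero, one_ne_zero])
    (by apply_rules [mul_ne_zero, qFact_ne_zero, qInt_ne_zero, Qprod_ne_zero,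
      Pprod_ne_zero, one_add_q_pow_ne_zero, one_ne_zero])]
  simp only [qInt_eq, div_eq_mul_inv]
  ring

open Finset in
set_option maxHeartbeats 4000000 in
lemma caseF (jj a b : ℕ) : gc (2*jj+a+b+4) (jj+a+2) (jj+1)
    = gc (2*jj+a+b+3) (jj+a+1) (jj+1)
      + q ^ (2*jj+a+b+3) * s * q ^ (a+1) * gc (2*jj+a+b+3) (jj+a+2) (jj+1)
      + q ^ (2*jj+a+b+3) * s * qInt (a+2) * gc (2*jj+a+b+3) (jj+a+2) jj := by
  unfold gc
  rw [show 2*jj+a+b+4-(jj+a+2) = jj+b+2 from by omega,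
    show 2*jj+a+b+3-(jj+a+1) = jj+b+2 from by omega,
    show 2*jj+a+b+3-(jj+a+2) = jj+b+1 from by omega,
    show 2*jj+a+b+3-jj = jj+a+b+3 from by omega,
    show 2*jj+a+b+4-(jj+1) = jj+a+b+3 from by omega,
    show 2*jj+a+b+3-(jj+1) = jj+a+b+2 from by omega,
    show jj+a+2-(jj+1) = a+1 from by omega,
    show jj+a+1-(jj+1) = a from by omega,
    show jj+a+2-jj = a+2 from by omega,
    show jj+b+2-(jj+1) = b+1 from by omega,
    show jj+b+1-(jj+1) = b from by omega,
    show jj+b+1-jj = b+1 from by omega,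
    show jj+a+1+1 = jj+a+2 from by omega,
    show jj+a+b+3 = jj+a+b+2+1 from by omega,
    show a+2 = a+1+1 from by omega,
    show jj+b+2 = jj+b+1+1 from by omega,
    show 2*jj+a+b+4 = 2*jj+a+b+3+1 from by omega,
    choose_two_succ (jj+1), choose_two_succ (jj+b+1),
    Finset.prod_Icc_succ_top (show jj+a+2+1 ≤ jj+a+b+2+1 from by omega),
    prod_Icc_bot (jj+a+2) (jj+a+b+2) (by omega),
    Finset.prod_range_succ, qFact_succ (2*jj+a+b+3), qFact_succ jj, qFact_succ b,
    qFact_succ (a+1), qFact_succ a]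
  rw [← mul_div_assoc, ← mul_div_assoc, div_add_div _ _
    (by apply_rules [mul_ne_zero, qFact_ne_zero, qInt_ne_zero, Qprod_ne_zero,
      Pprod_ne_zero, one_add_q_pow_ne_zero, one_ne_zero])
    (by apply_rules [mul_ne_zero, qFact_ne_zero, qInt_ne_zero, Qprod_ne_zero,
      Pprod_ne_zero, one_add_q_pow_ne_zero, one_ne_zero]),
    div_add_div _ _
    (by apply_rules [mul_ne_zero, qFact_ne_zero, qInt_ne_zero, Qprod_ne_zero,
      Pprod_ne_zero, one_add_q_pow_ne_zero, one_ne_zero])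
    (by apply_rules [mul_ne_zero, qFact_ne_zero, qInt_ne_zero, Qprod_ne_zero,
      Pprod_ne_zero, one_add_q_pow_ne_zero, one_ne_zero]),
    div_eq_div_iff
    (by apply_rules [mul_ne_zero, qFact_ne_zero, qInt_ne_zero, Qprod_ne_zero,
      Pprod_ne_zero, one_add_q_pow_ne_zero, one_ne_zero])
    (by apply_rules [mul_ne_zero, qFact_ne_zero, qInt_ne_zero, Qprod_ne_zero,
      Pprod_ne_zero, one_add_q_pow_ne_zero, one_ne_zero])]
  simp only [qInt_eq, div_eq_mul_inv]
  ring

open Finset in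
set_option maxHeartbeats 4000000 in
lemma caseG (jj a : ℕ) : gc (2*jj+a+3) (jj+a+2) (jj+1)
    = gc (2*jj+a+2) (jj+a+1) (jj+1)
      + q ^ (2*jj+a+2) * s * qInt (a+2) * gc (2*jj+a+2) (jj+a+2) jj := by
  unfold gc
  rw [show 2*jj+a+3-(jj+a+2) = jj+1 from by omega,
    show 2*jj+a+2-(jj+a+1) = jj+1 from by omega,
    show 2*jj+a+2-(jj+a+2) = jj from by omega,
    show 2*jj+a+3-(jj+1) = jj+a+2 from by omega,
    show 2*jj+a+2-(jj+1) = jj+a+1 from by omega,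
    show 2*jj+a+2-jj = jj+a+2 from by omega,
    show jj+a+2-(jj+1) = a+1 from by omega,
    show jj+a+1-(jj+1) = a from by omega,
    show jj+a+2-jj = a+2 from by omega,
    show jj+1-(jj+1) = 0 from by omega,
    show jj-jj = 0 from by omega,
    show a+2 = a+1+1 from by omega,
    show 2*jj+a+3 = 2*jj+a+2+1 from by omega]
  rw [Finset.Icc_eq_empty (show ¬(jj+a+2+1 ≤ jj+a+2) from by omega),
    Finset.Icc_eq_empty (show ¬(jj+a+1+1 ≤ jj+a+1) from by omega)]
  rw [choose_two_succ (jj+1), choose_two_succ jj,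
    Finset.prod_range_succ, qFact_succ (2*jj+a+2), qFact_succ jj,
    qFact_succ (a+1), qFact_succ a, qFact_zero]
  rw [← mul_div_assoc, div_add_div _ _
    (by apply_rules [mul_ne_zero, qFact_ne_zero, qInt_ne_zero, Qprod_ne_zero,
      Pprod_ne_zero, one_add_q_pow_ne_zero, one_ne_zero])
    (by apply_rules [mul_ne_zero, qFact_ne_zero, qInt_ne_zero, Qprod_ne_zero,
      Pprod_ne_zero, one_add_q_pow_ne_zero, one_ne_zero]),
    div_eq_div_iff
    (by apply_rules [mul_ne_zero, qFact_ne_zero, qInt_ne_zero, Qprod_ne_zero,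
      Pprod_ne_zero, one_add_q_pow_ne_zero, one_ne_zero])
    (by apply_rules [mul_ne_zero, qFact_ne_zero, qInt_ne_zero, Qprod_ne_zero,
      Pprod_ne_zero, one_add_q_pow_ne_zero, one_ne_zero])]
  simp only [qInt_eq, div_eq_mul_inv]
  ring

open Finset in
lemma cc_rec (n m j : ℕ) :
    cc (n+1) m j = (if m = 0 then 0 else cc n (m-1) j)
      + q ^ n * s * q ^ (m-j) * cc n m j
      + (if j = 0 then 0 else q ^ n * s * qInt (m - (j-1)) * cc n m (j-1)) := by
  by_cases H : m ≤ n+1 ∧ j ≤ m ∧ m + j ≤ n+1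
  case neg =>
    rw [cc_of_neg (show ¬(m ≤ n+1 ∧ j ≤ m ∧ m + j ≤ n+1) from H),
      cc_of_neg (show ¬(m ≤ n ∧ j ≤ m ∧ m + j ≤ n) from by omega), mul_zero]
    have hA : (if m = 0 then (0:F) else cc n (m-1) j) = 0 := by
      by_cases hm : m = 0
      · rw [if_pos hm]
      · rw [if_neg hm, cc_of_neg (show ¬(m-1 ≤ n ∧ j ≤ m-1 ∧ (m-1) + j ≤ n) from by omega)]
    have hC : (if j = 0 then (0:F) else q ^ n * s * qInt (m - (j-1)) * cc n m (j-1)) = 0 := by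
      by_cases hj : j = 0
      · rw [if_pos hj]
      · rw [if_neg hj]
        by_cases hjm : j ≤ m
        · rw [cc_of_neg (show ¬(m ≤ n ∧ j-1 ≤ m ∧ m + (j-1) ≤ n) from by omega), mul_zero]
        · rw [show m - (j-1) = 0 from by omega, qInt_zero, mul_zero, zero_mul]
    rw [hA, hC, add_zero, add_zero]
  case pos =>
  obtain ⟨h1, h2, h3⟩ := H
  rw [cc_of_pos (show m ≤ n+1 ∧ j ≤ m ∧ m + j ≤ n+1 from ⟨h1, h2, h3⟩)]
  rcases Nat.eq_zero_or_pos j with hj0 | hjpos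
  · -- j = 0
    subst hj0
    rw [if_pos rfl, add_zero, Nat.sub_zero]
    rcases Nat.eq_zero_or_pos m with hm0 | hmpos
    · -- case (a)
      subst hm0
      rw [if_pos rfl, zero_add, pow_zero, mul_one,
        cc_of_pos (show 0 ≤ n ∧ 0 ≤ 0 ∧ 0 + 0 ≤ n from by omega), caseA n]
    · rcases Nat.lt_or_ge n m with hnm | hnm
      · -- case (c): m = n+1
        have hm : m = n+1 := by omega
        subst hm
        rw [cc_of_neg (show ¬(n+1 ≤ n ∧ 0 ≤ n+1 ∧ (n+1) + 0 ≤ n) from by omega), mul_zero,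
          add_zero, if_neg (by omega), Nat.add_sub_cancel,
          cc_of_pos (show n ≤ n ∧ 0 ≤ n ∧ n + 0 ≤ n from by omega), caseC n]
      · -- case (b): 1 ≤ m ≤ n
        obtain ⟨mm, rfl⟩ : ∃ mm, m = mm + 1 := ⟨m - 1, by omega⟩
        obtain ⟨b, rfl⟩ : ∃ b, n = mm + 1 + b := ⟨n - (mm+1), by omega⟩
        rw [if_neg (by omega), Nat.add_sub_cancel,
          cc_of_pos (show mm ≤ mm+1+b ∧ 0 ≤ mm ∧ mm + 0 ≤ mm+1+b from by omega),
          cc_of_pos (show mm+1 ≤ mm+1+b ∧ 0 ≤ mm+1 ∧ (mm+1) + 0 ≤ mm+1+b from by omega),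
          caseB mm b]
  · -- j ≥ 1
    obtain ⟨jj, rfl⟩ : ∃ jj, j = jj + 1 := ⟨j - 1, by omega⟩
    rw [if_neg (show ¬(jj+1 = 0) from by omega), Nat.add_sub_cancel]
    rcases Nat.lt_or_ge jj (m - 1) with hjm | hjm
    · -- jj + 1 < m, i.e. j < m
      obtain ⟨a, rfl⟩ : ∃ a, m = jj + a + 2 := ⟨m - jj - 2, by omega⟩
      rw [if_neg (show ¬(jj + a + 2 = 0) from by omega)]
      rw [show jj + a + 2 - (jj + 1) = a + 1 from by omega,
        show jj + a + 2 - jj = a + 2 from by omega,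
        show jj + a + 2 - 1 = jj + a + 1 from by omega]
      rcases Nat.lt_or_ge n (jj + a + 2 + (jj + 1)) with hn | hn
      · -- case (g): m + j = n + 1
        have hne : n = 2*jj + a + 2 := by omega
        subst hne
        rw [cc_of_neg (show ¬(jj+a+2 ≤ 2*jj+a+2 ∧ jj+1 ≤ jj+a+2 ∧
            (jj+a+2) + (jj+1) ≤ 2*jj+a+2) from by omega), mul_zero, add_zero,
          cc_of_pos (show jj+a+1 ≤ 2*jj+a+2 ∧ jj+1 ≤ jj+a+1 ∧
            (jj+a+1) + (jj+1) ≤ 2*jj+a+2 from by omega),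
          cc_of_pos (show jj+a+2 ≤ 2*jj+a+2 ∧ jj ≤ jj+a+2 ∧
            (jj+a+2) + jj ≤ 2*jj+a+2 from by omega)]
        rw [show 2*jj + a + 2 + 1 = 2*jj+a+3 from by omega]
        exact caseG jj a
      · -- case (f)
        obtain ⟨b, rfl⟩ : ∃ b, n = 2*jj + a + b + 3 := ⟨n - (2*jj+a+3), by omega⟩
        rw [cc_of_pos (show jj+a+1 ≤ 2*jj+a+b+3 ∧ jj+1 ≤ jj+a+1 ∧
            (jj+a+1) + (jj+1) ≤ 2*jj+a+b+3 from by omega),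
          cc_of_pos (show jj+a+2 ≤ 2*jj+a+b+3 ∧ jj+1 ≤ jj+a+2 ∧
            (jj+a+2) + (jj+1) ≤ 2*jj+a+b+3 from by omega),
          cc_of_pos (show jj+a+2 ≤ 2*jj+a+b+3 ∧ jj ≤ jj+a+2 ∧
            (jj+a+2) + jj ≤ 2*jj+a+b+3 from by omega)]
        rw [show 2*jj + a + b + 3 + 1 = 2*jj+a+b+4 from by omega]
        exact caseF jj a b
    · -- j = m
      have hm : m = jj + 1 := by omega
      subst hm
      rw [if_neg (show ¬(jj + 1 = 0) from by omega), Nat.add_sub_cancel,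
        cc_of_neg (show ¬(jj ≤ n ∧ jj+1 ≤ jj ∧ jj + (jj+1) ≤ n) from by omega), zero_add,
        show jj + 1 - (jj + 1) = 0 from by omega, pow_zero, mul_one,
        show jj + 1 - jj = 1 from by omega]
      rcases Nat.lt_or_ge n (2*jj + 2) with hn | hn
      · -- case (e): 2m = n + 1
        have hne : n = 2*jj + 1 := by omega
        subst hne
        rw [cc_of_neg (show ¬(jj+1 ≤ 2*jj+1 ∧ jj+1 ≤ jj+1 ∧
            (jj+1) + (jj+1) ≤ 2*jj+1) from by omega), mul_zero, zero_add,
          cc_of_pos (show jj+1 ≤ 2*jj+1 ∧ jj ≤ jj+1 ∧ (jj+1) + jj ≤ 2*jj+1 from by omega)]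
        rw [show 2*jj + 1 + 1 = 2*jj+2 from by omega]
        exact caseE jj
      · -- case (d)
        obtain ⟨b, rfl⟩ : ∃ b, n = 2*jj + b + 2 := ⟨n - (2*jj+2), by omega⟩
        rw [cc_of_pos (show jj+1 ≤ 2*jj+b+2 ∧ jj+1 ≤ jj+1 ∧
            (jj+1) + (jj+1) ≤ 2*jj+b+2 from by omega),
          cc_of_pos (show jj+1 ≤ 2*jj+b+2 ∧ jj ≤ jj+1 ∧
            (jj+1) + jj ≤ 2*jj+b+2 from by omega)]
        rw [show 2*jj + b + 2 + 1 = 2*jj+b+3 from by omega]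
        exact caseD jj b

lemma step_pointwise (a b : ℕ) (u cval : F) :
    Xop * (cval • Mop a b) + (u • Dq) * (cval • Mop a b)
      = cval • Mop (a+1) b + ((u * q ^ a * cval) • Mop a (b+1)
        + (u * qInt a * cval) • Mop (a-1) b) := by
  have e1 : u * cval * q ^ a = u * q ^ a * cval := by ring
  have e2 : u * cval * qInt a = u * qInt a * cval := by ring
  rw [mul_smul_comm, Xop_mul_Mop, smul_mul_assoc, mul_smul_comm, smul_smul, Dq_mul_Mop,
    smul_add, smul_smul, smul_smul, e1, e2]

open Finset in
lemma SA_eq (n : ℕ) :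
    (∑ m ∈ range (n+1+1), ∑ j ∈ range (n+1+1),
        (if m = 0 then (0:F) else cc n (m-1) j) • Mop (m-j) (n+1-m-j))
      = ∑ m ∈ range (n+1), ∑ j ∈ range (n+1), cc n m j • Mop ((m-j)+1) (n-m-j) := by
  rw [Finset.sum_range_succ' (fun m => ∑ j ∈ range (n+1+1),
    (if m = 0 then (0:F) else cc n (m-1) j) • Mop (m-j) (n+1-m-j)) (n+1)]
  simp only [eq_self_iff_true, if_true, zero_smul, Finset.sum_const_zero, add_zero,
    Nat.succ_ne_zero, if_false, Nat.add_sub_cancel]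
  refine Finset.sum_congr rfl fun m hm => ?_
  rw [Finset.sum_range_succ (fun j => cc n m j • Mop (m+1-j) (n+1-(m+1)-j)) (n+1)]
  rw [cc_of_neg (by simp at hm; omega), zero_smul, add_zero]
  refine Finset.sum_congr rfl fun j hj => ?_
  simp only [mem_range] at hm hj
  by_cases h : j ≤ m
  · rw [show (m+1)-j = (m-j)+1 from by omega, show n+1-(m+1)-j = n-m-j from by omega]
  · rw [cc_of_neg (by omega), zero_smul, zero_smul]

open Finset in
lemma SB_eq (n : ℕ) :
    (∑ m ∈ range (n+1+1), ∑ j ∈ range (n+1+1),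
        (q ^ n * s * q ^ (m-j) * cc n m j) • Mop (m-j) (n+1-m-j))
      = ∑ m ∈ range (n+1), ∑ j ∈ range (n+1),
          (q ^ n * s * q ^ (m-j) * cc n m j) • Mop (m-j) ((n-m-j)+1) := by
  rw [Finset.sum_range_succ (fun m => ∑ j ∈ range (n+1+1),
    (q ^ n * s * q ^ (m-j) * cc n m j) • Mop (m-j) (n+1-m-j)) (n+1)]
  have hz : ∀ j ∈ range (n+1+1),
      (q ^ n * s * q ^ ((n+1)-j) * cc n (n+1) j) • Mop ((n+1)-j) (n+1-(n+1)-j) = 0 := by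
    intro j _
    rw [cc_of_neg (by omega), mul_zero, zero_smul]
  rw [Finset.sum_congr rfl hz, Finset.sum_const_zero, add_zero]
  refine Finset.sum_congr rfl fun m hm => ?_
  rw [Finset.sum_range_succ]
  rw [cc_of_neg (by simp at hm; omega), mul_zero, zero_smul, add_zero]
  refine Finset.sum_congr rfl fun j hj => ?_
  simp only [mem_range] at hm hj
  by_cases h : m + j ≤ n
  · rw [show n+1-m-j = (n-m-j)+1 from by omega]
  · rw [cc_of_neg (by omega), mul_zero, zero_smul, zero_smul]

open Finset in
lemma SC_eq (n : ℕ) :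
    (∑ m ∈ range (n+1+1), ∑ j ∈ range (n+1+1),
        (if j = 0 then (0:F) else q ^ n * s * qInt (m - (j-1)) * cc n m (j-1)) •
          Mop (m-j) (n+1-m-j))
      = ∑ m ∈ range (n+1), ∑ j ∈ range (n+1),
          (q ^ n * s * qInt (m-j) * cc n m j) • Mop ((m-j)-1) (n-m-j) := by
  rw [Finset.sum_range_succ (fun m => ∑ j ∈ range (n+1+1),
    (if j = 0 then (0:F) else q ^ n * s * qInt (m - (j-1)) * cc n m (j-1)) •
      Mop (m-j) (n+1-m-j)) (n+1)]
  have hz : (∑ j ∈ range (n+1+1),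
      (if j = 0 then (0:F) else q ^ n * s * qInt ((n+1) - (j-1)) * cc n (n+1) (j-1)) •
        Mop ((n+1)-j) (n+1-(n+1)-j)) = 0 := by
    refine Finset.sum_eq_zero fun j _ => ?_
    by_cases h : j = 0
    · rw [if_pos h, zero_smul]
    · rw [if_neg h, cc_of_neg (by omega), mul_zero, zero_smul]
  rw [hz, add_zero]
  refine Finset.sum_congr rfl fun m hm => ?_
  rw [Finset.sum_range_succ' (fun j =>
    (if j = 0 then (0:F) else q ^ n * s * qInt (m - (j-1)) * cc n m (j-1)) •
      Mop (m-j) (n+1-m-j)) (n+1)]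
  simp only [eq_self_iff_true, if_true, zero_smul, add_zero, Nat.succ_ne_zero, if_false,
    Nat.add_sub_cancel]
  refine Finset.sum_congr rfl fun j hj => ?_
  rw [show m-(j+1) = (m-j)-1 from by omega, show n+1-m-(j+1) = n-m-j from by omega]

open Finset in
lemma Fop_square : ∀ n : ℕ,
    Fop n = ∑ m ∈ range (n+1), ∑ j ∈ range (n+1), cc n m j • Mop (m-j) (n-m-j)
  | 0 => by
    show (1 : Module.End F (Polynomial F)) = _
    rw [Finset.sum_range_one, Finset.sum_range_one]
    rw [cc_of_pos (by omega)]
    have : gc 0 0 0 = 1 := by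
      simp [gc, qFact_zero]
    rw [this, one_smul]
    rfl
  | (n+1) => by
    have ih := Fop_square n
    show (Xop + (q ^ n * s) • Dq) * Fop n = _
    rw [ih]
    have expand : (Xop + (q ^ n * s) • Dq) *
        (∑ m ∈ range (n+1), ∑ j ∈ range (n+1), cc n m j • Mop (m-j) (n-m-j))
      = (∑ m ∈ range (n+1), ∑ j ∈ range (n+1), cc n m j • Mop ((m-j)+1) (n-m-j))
        + ((∑ m ∈ range (n+1), ∑ j ∈ range (n+1),
            (q ^ n * s * q ^ (m-j) * cc n m j) • Mop (m-j) ((n-m-j)+1))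
        + ∑ m ∈ range (n+1), ∑ j ∈ range (n+1),
            (q ^ n * s * qInt (m-j) * cc n m j) • Mop ((m-j)-1) (n-m-j)) := by
      rw [add_mul, Finset.mul_sum, Finset.mul_sum]
      simp only [Finset.mul_sum]
      rw [← Finset.sum_add_distrib]
      rw [← Finset.sum_add_distrib, ← Finset.sum_add_distrib]
      refine Finset.sum_congr rfl fun m _ => ?_
      rw [← Finset.sum_add_distrib, ← Finset.sum_add_distrib, ← Finset.sum_add_distrib]
      refine Finset.sum_congr rfl fun j _ => ?_
      exact step_pointwise _ _ _ _
    rw [expand, ← SA_eq, ← SB_eq, ← SC_eq]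
    rw [← Finset.sum_add_distrib, ← Finset.sum_add_distrib]
    refine Finset.sum_congr rfl fun m _ => ?_
    rw [← Finset.sum_add_distrib, ← Finset.sum_add_distrib]
    refine Finset.sum_congr rfl fun j _ => ?_
    rw [cc_rec n m j, add_smul, add_smul, add_assoc]

open Finset in
theorem Fop_normal_ordering (n : ℕ) :
    Fop n =
      ∑ m ∈ Finset.range (n + 1), ∑ j ∈ Finset.range (min m (n - m) + 1),
        (q ^ ((j + 1).choose 2 + (n - m).choose 2) *
            (∏ i ∈ Finset.Icc (m + 1) (n - j), (1 + q ^ i)) * qFact n * s ^ (n - m) /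
          ((∏ i ∈ Finset.range (n - m), (1 + q ^ (i + 1))) * qFact j * qFact (m - j) *
            qFact (n - m - j))) •
          (Xop ^ (m - j) * Dq ^ (n - m - j)) := by
  rw [Fop_square n]
  refine Finset.sum_congr rfl fun m hm => ?_
  simp only [mem_range] at hm
  rw [show (∑ j ∈ Finset.range (min m (n - m) + 1),
      (q ^ ((j + 1).choose 2 + (n - m).choose 2) *
          (∏ i ∈ Finset.Icc (m + 1) (n - j), (1 + q ^ i)) * qFact n * s ^ (n - m) /
        ((∏ i ∈ Finset.range (n - m), (1 + q ^ (i + 1))) * qFact j * qFact (m - j) *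
          qFact (n - m - j))) • (Xop ^ (m - j) * Dq ^ (n - m - j)))
    = ∑ j ∈ Finset.range (min m (n - m) + 1), cc n m j • Mop (m-j) (n-m-j) from
    Finset.sum_congr rfl fun j hj => by
      rw [cc_of_pos ⟨by omega, by simp only [mem_range] at hj; omega,
        by simp only [mem_range] at hj; omega⟩]
      rfl]
  exact (Finset.sum_subset
    (by intro j hj; simp only [mem_range] at *; omega)
    (fun j hj hnj => by
      rw [cc_of_neg (by simp only [mem_range] at hj hnj; omega), zero_smul])).symm

end
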